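/- arXiv:1408.3327 — 2 statements merged into one kernel-verified Lean document; each statement's English description precedes it below -/
import Mathlib

section
/- Fix a real δ > 0 and let V = {a : ℕ → K | for every real ρ with 0 < ρ < δ, ‖a n‖ · ρ^n → 0 as n → ∞}, the coefficient model of the ring of rigid-analytic functions on the open disk of radius δ (without boundary). Then the formal derivative D maps V into V and D : V → V is surjective. (This is the r = 0, n = 1 case of the paper's Lemma 2.1(b): H¹_dR of the open rigid disk vanishes.) -/
open Filter Topology

/-- The coefficient model of the ring of rigid-analytic functions on the open disk of radius `δ`
(without boundary): sequences `a : ℕ → K` such that `‖a n‖ * ρ ^ n → 0` for every radius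
`0 < ρ < δ`.  It is a `K`-submodule of `ℕ → K`. -/
def OpenDisk (K : Type*) [NormedField K] (δ : ℝ) : Submodule K (ℕ → K) where
  carrier := {a | ∀ ρ : ℝ, 0 < ρ → ρ < δ →
    Tendsto (fun n : ℕ => ‖a n‖ * ρ ^ n) atTop (𝓝 0)}
  zero_mem' := by
    intro ρ h₁ h₂
    simp
  add_mem' := by
    intro a b ha hb ρ h₁ h₂
    refine squeeze_zero (fun n => mul_nonneg (norm_nonneg _) (pow_nonneg h₁.le n))
      (fun n => ?_) (by simpa using (ha ρ h₁ h₂).add (hb ρ h₁ h₂))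
    have h3 : ‖(a + b) n‖ * ρ ^ n ≤ (‖a n‖ + ‖b n‖) * ρ ^ n :=
      mul_le_mul_of_nonneg_right (norm_add_le _ _) (pow_nonneg h₁.le n)
    simpa [add_mul] using h3
  smul_mem' := by
    intro c a ha ρ h₁ h₂
    simpa [norm_mul, mul_assoc] using (ha ρ h₁ h₂).const_mul ‖c‖

/-- The formal derivative operator `f ↦ df/dT` on coefficient sequences:
`(D a) n = (n + 1) * a (n + 1)`. -/
def DerN (K : Type*) [NormedField K] : (ℕ → K) →ₗ[K] (ℕ → K) where
  toFun a := fun n => ((n + 1 : ℕ) : K) * a (n + 1)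
  map_add' a b := by funext n; simp [mul_add]
  map_smul' c a := by
    funext n
    simp only [Pi.smul_apply, smul_eq_mul, RingHom.id_apply]
    ring

open IsUltrametricDist in

/-- In an ultrametric normed field of characteristic zero, the norms of natural numbers
decay at most polynomially: there is `M` with `‖n‖⁻¹ ≤ n ^ M` for `n ≥ 1`. -/
lemma norm_natCast_inv_le_pow (K : Type*) [NormedField K] [IsUltrametricDist K] [CharZero K] :
    ∃ M : ℕ, ∀ n : ℕ, 1 ≤ n → ‖((n : ℕ) : K)‖⁻¹ ≤ (n : ℝ) ^ M := by
  classical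
  by_cases h : ∃ n : ℕ, 2 ≤ n ∧ ‖((n : ℕ) : K)‖ < 1
  · -- there is a smallest such `n`; it is prime
    set p := Nat.find h with hp_def
    obtain ⟨hp2, hplt⟩ := Nat.find_spec h
    have hmin : ∀ m : ℕ, m < p → 2 ≤ m → ‖((m : ℕ) : K)‖ = 1 := by
      intro m hm h2
      have := Nat.find_min h hm
      push_neg at this
      exact le_antisymm (norm_natCast_le_one K m) (this h2)
    have hnorm1 : ∀ m : ℕ, 1 ≤ m → m < p → ‖((m : ℕ) : K)‖ = 1 := by
      intro m h1 hm
      rcases Nat.lt_or_ge m 2 with h' | h'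
      · interval_cases m <;> simp
      · exact hmin m hm h'
    have hp : p.Prime := by
      rw [Nat.prime_def_lt]
      refine ⟨hp2, fun m hm hdvd => ?_⟩
      by_contra hm1
      obtain ⟨k, hk⟩ := hdvd
      have hm0 : 1 ≤ m := Nat.one_le_iff_ne_zero.mpr (by rintro rfl; simp at hk; omega)
      have hk0 : 1 ≤ k := Nat.one_le_iff_ne_zero.mpr (by rintro rfl; simp at hk; omega)
      have hm2 : 2 ≤ m := by omega
      have hkp : k < p := by
        rcases Nat.lt_or_ge k p with h' | h'
        · exact h'
        · exfalso; nlinarith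
      have : ‖((p : ℕ) : K)‖ = 1 := by
        rw [hk, Nat.cast_mul, norm_mul, hmin m hm hm2, hnorm1 k hk0 hkp, one_mul]
      exact absurd this (ne_of_lt hplt)
    -- any natural number not divisible by `p` has norm one
    have hcop : ∀ m : ℕ, ¬ p ∣ m → ‖((m : ℕ) : K)‖ = 1 := by
      intro m hdvd
      refine le_antisymm (norm_natCast_le_one K m) ?_
      by_contra hlt
      push_neg at hlt
      have hg : Nat.gcd p m = 1 := (Nat.Prime.coprime_iff_not_dvd hp).mpr hdvd
      have hbez : (Nat.gcd p m : ℤ) = p * Nat.gcdA p m + m * Nat.gcdB p m :=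
        Nat.gcd_eq_gcd_ab p m
      rw [hg] at hbez
      have hcast : (1 : K) = ((p : ℕ) : K) * ((Nat.gcdA p m : ℤ) : K)
          + ((m : ℕ) : K) * ((Nat.gcdB p m : ℤ) : K) := by
        have := congrArg (fun z : ℤ => (z : K)) hbez
        push_cast at this
        exact this
      have h1 : (1 : ℝ) = ‖((p : ℕ) : K) * ((Nat.gcdA p m : ℤ) : K)
          + ((m : ℕ) : K) * ((Nat.gcdB p m : ℤ) : K)‖ := by
        rw [← hcast]; simp
      have hb := (norm_add_le_max (((p : ℕ) : K) * ((Nat.gcdA p m : ℤ) : K))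
        (((m : ℕ) : K) * ((Nat.gcdB p m : ℤ) : K)))
      have hA : ‖((Nat.gcdA p m : ℤ) : K)‖ ≤ 1 := norm_intCast_le_one K _
      have hB : ‖((Nat.gcdB p m : ℤ) : K)‖ ≤ 1 := norm_intCast_le_one K _
      have hlt1 : ‖((p : ℕ) : K) * ((Nat.gcdA p m : ℤ) : K)‖ < 1 := by
        rw [norm_mul]
        calc ‖((p : ℕ) : K)‖ * ‖((Nat.gcdA p m : ℤ) : K)‖
            ≤ ‖((p : ℕ) : K)‖ * 1 := by
              exact mul_le_mul_of_nonneg_left hA (norm_nonneg _)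
          _ < 1 := by rw [mul_one]; exact hplt
      have hlt2 : ‖((m : ℕ) : K) * ((Nat.gcdB p m : ℤ) : K)‖ < 1 := by
        rw [norm_mul]
        calc ‖((m : ℕ) : K)‖ * ‖((Nat.gcdB p m : ℤ) : K)‖
            ≤ ‖((m : ℕ) : K)‖ * 1 := mul_le_mul_of_nonneg_left hB (norm_nonneg _)
          _ < 1 := by rw [mul_one]; exact hlt
      have := hb.trans_lt (max_lt hlt1 hlt2)
      rw [← h1] at this
      exact lt_irrefl 1 this
    -- choose M with ‖p‖⁻¹ ≤ 2 ^ M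
    have hpne : ((p : ℕ) : K) ≠ 0 := Nat.cast_ne_zero.mpr (by omega)
    have hppos : (0 : ℝ) < ‖((p : ℕ) : K)‖ := norm_pos_iff.mpr hpne
    obtain ⟨M, hM⟩ := exists_nat_ge (‖((p : ℕ) : K)‖⁻¹)
    have hM2 : ‖((p : ℕ) : K)‖⁻¹ ≤ (2 : ℝ) ^ M := by
      refine hM.trans ?_
      exact_mod_cast (Nat.lt_two_pow_self (n := M)).le
    refine ⟨M, fun n hn => ?_⟩
    have hn0 : n ≠ 0 := by omega
    -- n = p ^ v * m with p ∤ m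
    set v := n.factorization p with hv
    have hfact : p ^ v * (n / p ^ v) = n := Nat.ordProj_mul_ordCompl_eq_self n p
    have hndvd : ¬ p ∣ (n / p ^ v) := Nat.not_dvd_ordCompl hp hn0
    have hnorm : ‖((n : ℕ) : K)‖ = ‖((p : ℕ) : K)‖ ^ v := by
      conv_lhs => rw [← hfact]
      push_cast
      rw [norm_mul, norm_pow, hcop _ hndvd, mul_one]
    rw [hnorm, ← inv_pow]
    have h2v : (2 : ℝ) ^ v ≤ (n : ℝ) := by
      have : 2 ^ v ≤ n := le_trans (Nat.pow_le_pow_left hp2 v) (Nat.ordProj_le p hn0)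
      exact_mod_cast this
    calc (‖((p : ℕ) : K)‖⁻¹) ^ v ≤ ((2 : ℝ) ^ M) ^ v := by
          apply pow_le_pow_left₀ (by positivity) hM2
      _ = ((2 : ℝ) ^ v) ^ M := by rw [← pow_mul, ← pow_mul, Nat.mul_comm]
      _ ≤ (n : ℝ) ^ M := pow_le_pow_left₀ (by positivity) h2v M
  · push_neg at h
    refine ⟨0, fun n hn => ?_⟩
    have : ‖((n : ℕ) : K)‖ = 1 := by
      rcases Nat.lt_or_ge n 2 with h' | h'
      · interval_cases n <;> simp
      · exact le_antisymm (norm_natCast_le_one K n) (h n h')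
    simp [this]

/-- **`H¹_dR` of the open rigid disk vanishes** (the `r = 0`, `n = 1` case of Lemma 2.1(b) of the
paper): the formal derivative maps the ring of rigid-analytic functions on the open disk of
radius `δ` into itself and is surjective on it. -/
theorem openDisk_deRham
    (K : Type*) [NormedField K] [IsUltrametricDist K] [CharZero K]
    (δ : ℝ) (hδ : 0 < δ) :
    (∀ a ∈ OpenDisk K δ, DerN K a ∈ OpenDisk K δ) ∧
      (∀ b ∈ OpenDisk K δ, ∃ a ∈ OpenDisk K δ, DerN K a = b) := by
  constructor
  · -- the derivative preserves the disk algebra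
    intro a ha ρ h₁ h₂
    have hshift : Tendsto (fun n : ℕ => ρ⁻¹ * (‖a (n + 1)‖ * ρ ^ (n + 1))) atTop (𝓝 0) := by
      have := (ha ρ h₁ h₂).comp (tendsto_add_atTop_nat 1)
      simpa using this.const_mul ρ⁻¹
    refine squeeze_zero (fun n => mul_nonneg (norm_nonneg _) (pow_nonneg h₁.le n))
      (fun n => ?_) hshift
    have h3 : ‖(DerN K a) n‖ = ‖((n + 1 : ℕ) : K)‖ * ‖a (n + 1)‖ := by
      simp [DerN, norm_mul]
    rw [h3]
    have h4 : ‖((n + 1 : ℕ) : K)‖ * ‖a (n + 1)‖ ≤ ‖a (n + 1)‖ := by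
      calc ‖((n + 1 : ℕ) : K)‖ * ‖a (n + 1)‖ ≤ 1 * ‖a (n + 1)‖ :=
            mul_le_mul_of_nonneg_right (IsUltrametricDist.norm_natCast_le_one K _)
              (norm_nonneg _)
        _ = ‖a (n + 1)‖ := one_mul _
    calc ‖((n + 1 : ℕ) : K)‖ * ‖a (n + 1)‖ * ρ ^ n ≤ ‖a (n + 1)‖ * ρ ^ n :=
          mul_le_mul_of_nonneg_right h4 (pow_nonneg h₁.le n)
      _ = ρ⁻¹ * (‖a (n + 1)‖ * ρ ^ (n + 1)) := by
          field_simp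
          ring
  · -- surjectivity: formal antiderivative
    intro b hb
    obtain ⟨M, hM⟩ := norm_natCast_inv_le_pow K
    set a : ℕ → K := fun n => if n = 0 then 0 else ((n : ℕ) : K)⁻¹ * b (n - 1) with ha_def
    have hDer : DerN K a = b := by
      funext n
      have hne : ((n + 1 : ℕ) : K) ≠ 0 := Nat.cast_ne_zero.mpr (Nat.succ_ne_zero n)
      simp only [DerN, LinearMap.coe_mk, AddHom.coe_mk, ha_def]
      simp only [Nat.succ_ne_zero, if_false, Nat.add_sub_cancel]
      rw [mul_inv_cancel_left₀ hne]
    refine ⟨a, ?_, hDer⟩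
    intro ρ h₁ h₂
    rw [← tendsto_add_atTop_iff_nat 1]
    set ρ' : ℝ := (ρ + δ) / 2 with hρ'
    have hρ'pos : 0 < ρ' := by positivity
    have hρρ' : ρ < ρ' := by rw [hρ']; linarith
    have hρ'δ : ρ' < δ := by rw [hρ']; linarith
    set r : ℝ := ρ / ρ' with hr
    have hr0 : 0 < r := div_pos h₁ hρ'pos
    have hr1 : r < 1 := (div_lt_one hρ'pos).mpr hρρ'
    -- limit of the dominating sequence
    have hg1 : Tendsto (fun n : ℕ => ‖b n‖ * ρ' ^ n) atTop (𝓝 0) := hb ρ' hρ'pos hρ'δ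
    have hg2 : Tendsto (fun n : ℕ => ((n + 1 : ℕ) : ℝ) ^ M * r ^ n) atTop (𝓝 0) := by
      have hsum : Tendsto (fun n : ℕ => (n : ℝ) ^ M * r ^ n) atTop (𝓝 0) := by
        have : ‖r‖ < 1 := by rw [Real.norm_eq_abs, abs_of_pos hr0]; exact hr1
        exact (summable_pow_mul_geometric_of_norm_lt_one M this).tendsto_atTop_zero
      have hcomp := (hsum.comp (tendsto_add_atTop_nat 1)).const_mul r⁻¹
      rw [mul_zero] at hcomp
      refine hcomp.congr (fun n => ?_)
      have : r ^ (n + 1) = r * r ^ n := pow_succ' r n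
      simp only [Function.comp_apply, this]
      push_cast
      field_simp
    have hlim : Tendsto (fun n : ℕ => ρ * ((‖b n‖ * ρ' ^ n) * (((n + 1 : ℕ) : ℝ) ^ M * r ^ n)))
        atTop (𝓝 0) := by
      simpa using (hg1.mul hg2).const_mul ρ
    refine squeeze_zero (fun n => mul_nonneg (norm_nonneg _) (pow_nonneg h₁.le _))
      (fun n => ?_) hlim
    -- the pointwise bound
    have hρpow : ρ ^ (n + 1) = ρ * (ρ' ^ n * r ^ n) := by
      rw [← mul_pow, hr, mul_div_cancel₀ _ (ne_of_gt hρ'pos), pow_succ']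
    have hnorm_a : ‖a (n + 1)‖ = ‖(((n + 1 : ℕ)) : K)‖⁻¹ * ‖b n‖ := by
      simp only [ha_def, Nat.succ_ne_zero, if_false, Nat.add_sub_cancel, norm_mul, norm_inv]
    rw [hnorm_a, hρpow]
    have hb1 : ‖(((n + 1 : ℕ)) : K)‖⁻¹ ≤ ((n + 1 : ℕ) : ℝ) ^ M := hM (n + 1) (Nat.succ_le_succ (Nat.zero_le n))
    have key : ‖(((n + 1 : ℕ)) : K)‖⁻¹ * ‖b n‖ * (ρ * (ρ' ^ n * r ^ n))
        ≤ ((n + 1 : ℕ) : ℝ) ^ M * ‖b n‖ * (ρ * (ρ' ^ n * r ^ n)) := by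
      apply mul_le_mul_of_nonneg_right (mul_le_mul_of_nonneg_right hb1 (norm_nonneg _))
      positivity
    refine key.trans (le_of_eq ?_)
    ring
end

section
/- Fix reals 0 < γ < δ and let V = {a : ℤ → K | for all reals s, t with γ < s ≤ t < δ, ‖a n‖ · t^n → 0 as n → +∞ and ‖a n‖ · s^n → 0 as n → −∞}, the coefficient model of the ring of rigid-analytic functions on the open annulus γ < |T| < δ. Then the formal derivative D maps V into V, an element a ∈ V lies in the range of D : V → V if and only if a(−1) = 0, and the quotient K-vector space V ⧸ range(D) is one-dimensional, spanned by the class of the indicator sequence of −1 (the class of dT/T). (This is the n = r = 1 case of the paper's Lemma 2.1(b).) -/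
open Filter Topology

/-- The coefficient model of the ring of rigid-analytic functions on the open annulus
`γ < |T| < δ`: two-sided sequences `a : ℤ → K` such that for all radii `γ < s ≤ t < δ` one has
`‖a n‖ * t^n → 0` as `n → +∞` and `‖a n‖ * s^n → 0` as `n → −∞`.  It is a `K`-submodule of
`ℤ → K`. -/
def OpenAnnulus (K : Type*) [NormedField K] (γ δ : ℝ) (hγ : 0 < γ) :
    Submodule K (ℤ → K) where
  carrier := {a | ∀ s t : ℝ, γ < s → s ≤ t → t < δ →
    Tendsto (fun n : ℤ => ‖a n‖ * t ^ n) atTop (𝓝 0) ∧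
    Tendsto (fun n : ℤ => ‖a n‖ * s ^ n) atBot (𝓝 0)}
  zero_mem' := by
    intro s t hs hst htδ
    constructor <;> simp
  add_mem' := by
    intro a b ha hb s t hs hst htδ
    have hs0 : 0 < s := hγ.trans hs
    have ht0 : 0 < t := hs0.trans_le hst
    obtain ⟨haT, haB⟩ := ha s t hs hst htδ
    obtain ⟨hbT, hbB⟩ := hb s t hs hst htδ
    constructor
    · refine squeeze_zero
        (fun n => mul_nonneg (norm_nonneg _) (zpow_nonneg ht0.le n))
        (fun n => ?_) (by simpa using haT.add hbT)
      have h3 : ‖(a + b) n‖ * t ^ n ≤ (‖a n‖ + ‖b n‖) * t ^ n :=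
        mul_le_mul_of_nonneg_right (norm_add_le _ _) (zpow_nonneg ht0.le n)
      simpa [add_mul] using h3
    · refine squeeze_zero
        (fun n => mul_nonneg (norm_nonneg _) (zpow_nonneg hs0.le n))
        (fun n => ?_) (by simpa using haB.add hbB)
      have h3 : ‖(a + b) n‖ * s ^ n ≤ (‖a n‖ + ‖b n‖) * s ^ n :=
        mul_le_mul_of_nonneg_right (norm_add_le _ _) (zpow_nonneg hs0.le n)
      simpa [add_mul] using h3
  smul_mem' := by
    intro c a ha s t hs hst htδ
    obtain ⟨haT, haB⟩ := ha s t hs hst htδ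
    exact ⟨by simpa [norm_mul, mul_assoc] using haT.const_mul ‖c‖,
      by simpa [norm_mul, mul_assoc] using haB.const_mul ‖c‖⟩

/-- The formal derivative operator `f ↦ df/dT` on two-sided (Laurent) coefficient sequences:
`(D a) n = (n + 1) * a (n + 1)`. -/
def DerZ (K : Type*) [NormedField K] : (ℤ → K) →ₗ[K] (ℤ → K) where
  toFun a := fun n => ((n + 1 : ℤ) : K) * a (n + 1)
  map_add' a b := by funext n; simp [mul_add]
  map_smul' c a := by
    funext n
    simp only [Pi.smul_apply, smul_eq_mul, RingHom.id_apply]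
    ring

section Aux

variable {K : Type*} [NormedField K] [IsUltrametricDist K] [CharZero K]

lemma DerZ_apply (a : ℤ → K) (n : ℤ) : DerZ K a n = ((n + 1 : ℤ) : K) * a (n + 1) := rfl

omit [CharZero K] in
lemma aux_two_primes {p q : ℕ} (hp : p.Prime) (hq : q.Prime) (hpq : p ≠ q)
    (h1 : ‖(p : K)‖ < 1) (h2 : ‖(q : K)‖ < 1) : False := by
  have hco : IsCoprime (p : ℤ) (q : ℤ) := by
    rw [Int.isCoprime_iff_gcd_eq_one]
    simpa using (Nat.coprime_primes hp hq).mpr hpq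
  obtain ⟨u, v, huv⟩ := hco
  have h1' : ‖((u * p : ℤ) : K)‖ < 1 := by
    push_cast
    rw [norm_mul]
    calc ‖(u : K)‖ * ‖(p : K)‖ ≤ 1 * ‖(p : K)‖ := by
          gcongr; exact IsUltrametricDist.norm_intCast_le_one K u
      _ < 1 := by simpa using h1
  have h2' : ‖((v * q : ℤ) : K)‖ < 1 := by
    push_cast
    rw [norm_mul]
    calc ‖(v : K)‖ * ‖(q : K)‖ ≤ 1 * ‖(q : K)‖ := by
          gcongr; exact IsUltrametricDist.norm_intCast_le_one K v
      _ < 1 := by simpa using h2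
  have : ‖((u * p + v * q : ℤ) : K)‖ < 1 := by
    push_cast at h1' h2' ⊢
    exact lt_of_le_of_lt (IsUltrametricDist.norm_add_le_max _ _) (max_lt h1' h2')
  rw [huv] at this
  simp at this

omit [IsUltrametricDist K] [CharZero K] in
lemma aux_norm_one : ∀ n : ℕ, n ≠ 0 → (∀ q : ℕ, q.Prime → q ∣ n → ‖(q : K)‖ = 1) →
    ‖(n : K)‖ = 1 := by
  intro n
  induction n using Nat.strong_induction_on with
  | _ n ih =>
    intro hn h
    rcases eq_or_lt_of_le (Nat.one_le_iff_ne_zero.mpr hn) with h1 | h1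
    · simp [← h1]
    · have hp : n.minFac.Prime := Nat.minFac_prime (by omega)
      obtain ⟨m, hm⟩ := n.minFac_dvd
      have hm0 : m ≠ 0 := by rintro rfl; simp at hm; omega
      have hmlt : m < n := by
        have := hp.two_le
        calc m < 2 * m := by omega
          _ ≤ n.minFac * m := by gcongr
          _ = n := hm.symm
      have : ‖(m : K)‖ = 1 := ih m hmlt hm0 fun q hq hqm =>
        h q hq (hm ▸ hqm.mul_left _)
      rw [hm]
      push_cast
      rw [norm_mul, this, h n.minFac hp n.minFac_dvd, one_mul]

/-- A subexponential lower bound on the norms of the integers in an ultrametric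
normed field of characteristic zero. -/
lemma aux_norm_lower (K : Type*) [NormedField K] [IsUltrametricDist K] [CharZero K] :
    ∃ c : ℝ, 0 ≤ c ∧ ∀ n : ℕ, n ≠ 0 → (n : ℝ) ^ (-c) ≤ ‖(n : K)‖ := by
  by_cases H : ∀ q : ℕ, q.Prime → ‖(q : K)‖ = 1
  · exact ⟨0, le_refl _, fun n hn => by
      rw [aux_norm_one n hn fun q hq _ => H q hq]
      simp⟩
  · push_neg at H
    obtain ⟨p, hp, hp1⟩ := H
    have hple : ‖(p : K)‖ ≤ 1 := by
      simpa using IsUltrametricDist.norm_intCast_le_one K p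
    have hplt : ‖(p : K)‖ < 1 := lt_of_le_of_ne hple hp1
    have hp0K : (0 : ℝ) < ‖(p : K)‖ := by
      rw [norm_pos_iff]
      exact_mod_cast hp.ne_zero
    have hp1R : (1 : ℝ) < (p : ℝ) := by exact_mod_cast hp.one_lt
    set c : ℝ := -Real.log ‖(p : K)‖ / Real.log p with hc
    have hlogp : 0 < Real.log p := Real.log_pos hp1R
    have hcpos : 0 < c := by
      apply div_pos _ hlogp
      simpa using Real.log_neg hp0K hplt
    have hpkey : (p : ℝ) ^ (-c) = ‖(p : K)‖ := by
      rw [Real.rpow_def_of_pos (by linarith), ← Real.exp_log hp0K]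
      congr 1
      field_simp [hc]
      have hlc : Real.log p * c = -Real.log ‖(p : K)‖ := by
        rw [hc, mul_div_assoc', mul_comm, mul_div_assoc, div_self hlogp.ne', mul_one]
      linarith
    refine ⟨c, hcpos.le, ?_⟩
    intro n
    induction n using Nat.strong_induction_on with
    | _ n ih =>
      intro hn
      by_cases hdvd : p ∣ n
      · obtain ⟨m, hm⟩ := hdvd
        have hm0 : m ≠ 0 := by rintro rfl; simp at hm; omega
        have hmlt : m < n := by
          have := hp.two_le
          calc m < 2 * m := by omega
            _ ≤ p * m := by gcongr
            _ = n := hm.symm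
        have hrec := ih m hmlt hm0
        have : ((n : ℝ)) ^ (-c) = (p : ℝ) ^ (-c) * (m : ℝ) ^ (-c) := by
          rw [hm]
          push_cast
          rw [Real.mul_rpow (by positivity) (by positivity)]
        rw [this, hm, hpkey]
        push_cast
        rw [norm_mul]
        gcongr
      · have h1 : ‖(n : K)‖ = 1 := by
          apply aux_norm_one n hn
          intro q hq hqn
          rcases lt_or_eq_of_le (by simpa using IsUltrametricDist.norm_intCast_le_one K q) with h | h
          · exact absurd (aux_two_primes hq hp (fun hqp => hdvd (hqp ▸ hqn)) h hplt) not_false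
          · exact h
        rw [h1]
        apply Real.rpow_le_one_of_one_le_of_nonpos
        · exact_mod_cast Nat.one_le_iff_ne_zero.mpr hn
        · linarith

lemma aux_norm_inv_le {c : ℝ} (hc : ∀ m : ℕ, m ≠ 0 → (m : ℝ) ^ (-c) ≤ ‖(m : K)‖)
    (n : ℤ) (hn : n ≠ 0) : ‖(n : K)‖⁻¹ ≤ (n.natAbs : ℝ) ^ c := by
  have hA0 : n.natAbs ≠ 0 := Int.natAbs_ne_zero.mpr hn
  have hnorm : ‖(n : K)‖ = ‖((n.natAbs : ℕ) : K)‖ := by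
    rcases Int.natAbs_eq n with h | h
    · conv_lhs => rw [h, Int.cast_natCast]
    · conv_lhs => rw [h, Int.cast_neg, Int.cast_natCast]
      rw [norm_neg]
  have h1 : ((n.natAbs : ℝ)) ^ (-c) ≤ ‖(n : K)‖ := hnorm ▸ hc n.natAbs hA0
  have h2 : (0 : ℝ) < ((n.natAbs : ℝ)) ^ (-c) := by
    have : (0 : ℝ) < (n.natAbs : ℝ) := by exact_mod_cast Nat.pos_of_ne_zero hA0
    positivity
  calc ‖(n : K)‖⁻¹ ≤ (((n.natAbs : ℝ)) ^ (-c))⁻¹ := by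
        exact inv_anti₀ h2 h1
    _ = (n.natAbs : ℝ) ^ c := by
        rw [Real.rpow_neg (by positivity), inv_inv]

lemma aux_nat_tendsto {c r : ℝ} (h0 : 0 < r) (h1 : r < 1) :
    Tendsto (fun m : ℕ => (m : ℝ) ^ c * r ^ m) atTop (𝓝 0) := by
  have hb : 0 < -Real.log r := by simpa using Real.log_neg h0 h1
  have H := (tendsto_rpow_mul_exp_neg_mul_atTop_nhds_zero c (-Real.log r) hb).comp
    (tendsto_natCast_atTop_atTop (R := ℝ))
  refine H.congr fun m => ?_
  simp only [Function.comp]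
  congr 1
  rw [neg_neg, mul_comm, Real.exp_nat_mul, Real.exp_log h0]

lemma aux_int_of_nat {f : ℤ → ℝ} (h : Tendsto (fun m : ℕ => f m) atTop (𝓝 0)) :
    Tendsto f atTop (𝓝 0) := by
  rw [Metric.tendsto_atTop] at h ⊢
  intro ε hε
  obtain ⟨N, hN⟩ := h ε hε
  refine ⟨(N : ℤ), fun n hn => ?_⟩
  have h0 : (0 : ℤ) ≤ n := le_trans (Int.natCast_nonneg N) hn
  have := hN n.toNat (by omega)
  rwa [Int.toNat_of_nonneg h0] at this

lemma aux_ztop {c r : ℝ} (h0 : 0 < r) (h1 : r < 1) :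
    Tendsto (fun n : ℤ => (n.natAbs : ℝ) ^ c * r ^ n) atTop (𝓝 0) := by
  apply aux_int_of_nat
  refine (aux_nat_tendsto h0 h1 (c := c)).congr fun m => ?_
  rw [Int.natAbs_natCast, zpow_natCast]

lemma aux_zbot {c r : ℝ} (h1 : 1 < r) :
    Tendsto (fun n : ℤ => (n.natAbs : ℝ) ^ c * r ^ n) atBot (𝓝 0) := by
  have h0 : (0 : ℝ) < r := lt_trans one_pos h1
  have H := (aux_ztop (c := c) (r := r⁻¹) (by positivity) (inv_lt_one_of_one_lt₀ h1)).comp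
    tendsto_neg_atBot_atTop
  refine H.congr fun n => ?_
  simp only [Function.comp]
  rw [Int.natAbs_neg, zpow_neg, inv_zpow, inv_inv]

lemma aux_identity (A x t t' : ℝ) (ht : t ≠ 0) (ht' : t' ≠ 0) (n : ℤ) :
    (x * A) * t ^ n = (A * t' ^ (n - 1)) * ((x * (t / t') ^ n) * ((t / t')⁻¹ * t)) := by
  have e1 : t' ^ (n - 1) = t' ^ n * t'⁻¹ := zpow_sub_one₀ ht' n
  have e2 : (t / t') ^ n = t ^ n / t' ^ n := div_zpow t t' n
  have h3 : (t' : ℝ) ^ n ≠ 0 := zpow_ne_zero n ht'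
  rw [e1, e2]
  field_simp

lemma aux_shift_top : Tendsto (fun n : ℤ => n - 1) atTop atTop :=
  (tendsto_atTop_add_const_right atTop (-1) tendsto_id).congr
    fun n => (sub_eq_add_neg n 1).symm

lemma aux_shift_bot : Tendsto (fun n : ℤ => n - 1) atBot atBot :=
  (tendsto_atBot_add_const_right atBot (-1) tendsto_id).congr
    fun n => (sub_eq_add_neg n 1).symm

lemma aux_shift_top' : Tendsto (fun n : ℤ => n + 1) atTop atTop :=
  tendsto_atTop_add_const_right atTop 1 tendsto_id

lemma aux_shift_bot' : Tendsto (fun n : ℤ => n + 1) atBot atBot :=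
  tendsto_atBot_add_const_right atBot 1 tendsto_id

/-- `D` maps the open annulus ring to itself. -/
lemma aux_D_mem {γ δ : ℝ} {hγ : 0 < γ} {a : ℤ → K} (ha : a ∈ OpenAnnulus K γ δ hγ) :
    DerZ K a ∈ OpenAnnulus K γ δ hγ := by
  intro s t hs hst htδ
  have hs0 : 0 < s := hγ.trans hs
  have ht0 : 0 < t := hs0.trans_le hst
  obtain ⟨haT, haB⟩ := ha s t hs hst htδ
  constructor
  · have h1 : Tendsto (fun n : ℤ => ‖a (n + 1)‖ * t ^ (n + 1) * t⁻¹) atTop (𝓝 0) := by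
      simpa using (haT.comp aux_shift_top').mul_const t⁻¹
    refine squeeze_zero (fun n => by positivity) (fun n => ?_) h1
    rw [DerZ_apply, norm_mul]
    calc ‖((n + 1 : ℤ) : K)‖ * ‖a (n + 1)‖ * t ^ n ≤ 1 * ‖a (n + 1)‖ * t ^ n := by
          gcongr
          exact IsUltrametricDist.norm_intCast_le_one K _
      _ = ‖a (n + 1)‖ * t ^ (n + 1) * t⁻¹ := by
          rw [zpow_add_one₀ ht0.ne']
          field_simp
  · have h1 : Tendsto (fun n : ℤ => ‖a (n + 1)‖ * s ^ (n + 1) * s⁻¹) atBot (𝓝 0) := by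
      simpa using (haB.comp aux_shift_bot').mul_const s⁻¹
    refine squeeze_zero (fun n => by positivity) (fun n => ?_) h1
    rw [DerZ_apply, norm_mul]
    calc ‖((n + 1 : ℤ) : K)‖ * ‖a (n + 1)‖ * s ^ n ≤ 1 * ‖a (n + 1)‖ * s ^ n := by
          gcongr
          exact IsUltrametricDist.norm_intCast_le_one K _
      _ = ‖a (n + 1)‖ * s ^ (n + 1) * s⁻¹ := by
          rw [zpow_add_one₀ hs0.ne']
          field_simp

/-- The antiderivative: if the residue coefficient vanishes, `a` is a derivative. -/
lemma aux_antideriv {γ δ : ℝ} {hγ : 0 < γ} (hγδ : γ < δ) {a : ℤ → K}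
    (ha : a ∈ OpenAnnulus K γ δ hγ) (ha1 : a (-1) = 0) :
    ∃ b ∈ OpenAnnulus K γ δ hγ, DerZ K b = a := by
  obtain ⟨c, hc0, hc⟩ := aux_norm_lower K
  set b : ℤ → K := fun n => if n = 0 then 0 else ((n : ℤ) : K)⁻¹ * a (n - 1) with hbdef
  have hDb : DerZ K b = a := by
    funext n
    rw [DerZ_apply]
    by_cases h : n = -1
    · subst h; simp [hbdef, ha1]
    · have h1 : n + 1 ≠ 0 := by omega
      have h2 : ((n + 1 : ℤ) : K) ≠ 0 := Int.cast_ne_zero.mpr h1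
      simp only [hbdef, if_neg h1, add_sub_cancel_right]
      rw [← mul_assoc, mul_inv_cancel₀ h2, one_mul]
  refine ⟨b, ?_, hDb⟩
  intro s t hs hst htδ
  have hs0 : 0 < s := hγ.trans hs
  have ht0 : 0 < t := hs0.trans_le hst
  have hbound : ∀ n : ℤ, n ≠ 0 → ‖b n‖ ≤ (n.natAbs : ℝ) ^ c * ‖a (n - 1)‖ := by
    intro n hn
    simp only [hbdef, if_neg hn, norm_mul, norm_inv]
    exact mul_le_mul_of_nonneg_right (aux_norm_inv_le hc n hn) (norm_nonneg _)
  constructor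
  · -- atTop, radius t: compare with t' ∈ (t, δ)
    set t' : ℝ := (t + δ) / 2 with ht'def
    have htt' : t < t' := by rw [ht'def]; linarith
    have ht'δ : t' < δ := by rw [ht'def]; linarith
    have ht'0 : 0 < t' := ht0.trans htt'
    obtain ⟨hT', -⟩ := ha s t' hs (hst.trans htt'.le) ht'δ
    have hA : Tendsto (fun n : ℤ => ‖a (n - 1)‖ * t' ^ (n - 1)) atTop (𝓝 0) :=
      hT'.comp aux_shift_top
    have hB : Tendsto (fun n : ℤ => ((n.natAbs : ℝ) ^ c * (t / t') ^ n) * ((t / t')⁻¹ * t))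
        atTop (𝓝 0) := by
      simpa using (aux_ztop (c := c) (by positivity) ((div_lt_one ht'0).mpr htt')).mul_const
        ((t / t')⁻¹ * t)
    have hM := hA.mul hB
    rw [mul_zero] at hM
    refine squeeze_zero' (Eventually.of_forall fun n => by positivity) ?_ hM
    filter_upwards [eventually_ge_atTop 1] with n hn
    have hn0 : n ≠ 0 := by omega
    calc ‖b n‖ * t ^ n ≤ ((n.natAbs : ℝ) ^ c * ‖a (n - 1)‖) * t ^ n :=
          mul_le_mul_of_nonneg_right (hbound n hn0) (zpow_nonneg ht0.le n)
      _ = _ := aux_identity _ _ _ _ ht0.ne' ht'0.ne' n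
  · -- atBot, radius s: compare with s' ∈ (γ, s)
    set s' : ℝ := (γ + s) / 2 with hs'def
    have hγs' : γ < s' := by rw [hs'def]; linarith
    have hs's : s' < s := by rw [hs'def]; linarith
    have hs'0 : 0 < s' := hγ.trans hγs'
    obtain ⟨-, hB'⟩ := ha s' t hγs' (hs's.le.trans hst) htδ
    have hA : Tendsto (fun n : ℤ => ‖a (n - 1)‖ * s' ^ (n - 1)) atBot (𝓝 0) :=
      hB'.comp aux_shift_bot
    have hB : Tendsto (fun n : ℤ => ((n.natAbs : ℝ) ^ c * (s / s') ^ n) * ((s / s')⁻¹ * s))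
        atBot (𝓝 0) := by
      simpa using (aux_zbot (c := c) ((one_lt_div hs'0).mpr hs's)).mul_const
        ((s / s')⁻¹ * s)
    have hM := hA.mul hB
    rw [mul_zero] at hM
    refine squeeze_zero' (Eventually.of_forall fun n => by positivity) ?_ hM
    filter_upwards [eventually_le_atBot (-1)] with n hn
    have hn0 : n ≠ 0 := by omega
    calc ‖b n‖ * s ^ n ≤ ((n.natAbs : ℝ) ^ c * ‖a (n - 1)‖) * s ^ n :=
          mul_le_mul_of_nonneg_right (hbound n hn0) (zpow_nonneg hs0.le n)
      _ = _ := aux_identity _ _ _ _ hs0.ne' hs'0.ne' n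



omit [IsUltrametricDist K] [CharZero K] in
lemma aux_e_mem {γ δ : ℝ} (hγ : 0 < γ) :
    (fun n : ℤ => if n = -1 then (1 : K) else 0) ∈ OpenAnnulus K γ δ hγ := by
  intro s t hs hst htδ
  constructor
  · refine tendsto_const_nhds.congr' ?_
    filter_upwards [eventually_ge_atTop 0] with n hn
    have h : n ≠ -1 := by omega
    simp [h]
  · refine tendsto_const_nhds.congr' ?_
    filter_upwards [eventually_le_atBot (-2)] with n hn
    have h : n ≠ -1 := by omega
    simp [h]

end Aux

/-- **`H¹_dR` of the open rigid annulus is one-dimensional, spanned by `dT/T`** (the `n = r = 1`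
case of Lemma 2.1(b) of the paper): the formal derivative `D` maps the ring `V` of rigid-analytic
functions on the open annulus `γ < |T| < δ` into itself, an element `a ∈ V` is in the range of
`D : V → V` if and only if its residue coefficient `a (-1)` vanishes, and the quotient
`V ⧸ range D` is a one-dimensional `K`-vector space spanned by the class of the indicator
sequence of `-1` (the class of the differential `dT/T`). -/


theorem openAnnulus_deRham
    (K : Type*) [NormedField K] [IsUltrametricDist K] [CharZero K]
    (γ δ : ℝ) (hγ : 0 < γ) (hγδ : γ < δ) :
    (∀ a ∈ OpenAnnulus K γ δ hγ, DerZ K a ∈ OpenAnnulus K γ δ hγ) ∧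
    (∀ a ∈ OpenAnnulus K γ δ hγ,
      ((∃ b ∈ OpenAnnulus K γ δ hγ, DerZ K b = a) ↔ a (-1) = 0)) ∧
    ∃ he : (fun n : ℤ => if n = -1 then (1 : K) else 0) ∈ OpenAnnulus K γ δ hγ,
      Submodule.span K
          {(Submodule.Quotient.mk ⟨fun n : ℤ => if n = -1 then (1 : K) else 0, he⟩ :
            OpenAnnulus K γ δ hγ ⧸
              Submodule.comap (OpenAnnulus K γ δ hγ).subtype
                (Submodule.map (DerZ K) (OpenAnnulus K γ δ hγ)))} = ⊤ ∧
      Module.finrank K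
          (OpenAnnulus K γ δ hγ ⧸
            Submodule.comap (OpenAnnulus K γ δ hγ).subtype
              (Submodule.map (DerZ K) (OpenAnnulus K γ δ hγ))) = 1 := by
  have hiff : ∀ a ∈ OpenAnnulus K γ δ hγ,
      ((∃ b ∈ OpenAnnulus K γ δ hγ, DerZ K b = a) ↔ a (-1) = 0) := by
    intro a ha
    constructor
    · rintro ⟨b, hb, rfl⟩
      rw [DerZ_apply]
      norm_num
    · exact fun h => aux_antideriv hγδ ha h
  set V := OpenAnnulus K γ δ hγ with hV
  set W := Submodule.comap V.subtype (Submodule.map (DerZ K) V) with hW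
  set e : V := ⟨fun n : ℤ => if n = -1 then (1 : K) else 0, aux_e_mem hγ⟩ with he
  have memW : ∀ x : V, (x ∈ W ↔ (x : ℤ → K) (-1) = 0) := by
    intro x
    simp only [hW, Submodule.mem_comap, Submodule.mem_map, Submodule.subtype_apply]
    exact hiff x x.2
  have hkey : ∀ x : V ⧸ W, ∃ cc : K, cc • Submodule.Quotient.mk e = x := by
    intro x
    obtain ⟨y, rfl⟩ := Submodule.Quotient.mk_surjective W x
    refine ⟨(y : ℤ → K) (-1), ?_⟩
    rw [← Submodule.Quotient.mk_smul, Submodule.Quotient.eq, memW]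
    simp [he]
  haveI : NoZeroSMulDivisors K (V ⧸ W) := by
    set_option synthInstance.maxHeartbeats 1000000 in infer_instance
  have hne : Submodule.Quotient.mk e ≠ (0 : V ⧸ W) := by
    rw [Ne, Submodule.Quotient.mk_eq_zero, memW]
    simp [he]
  have hspan : Submodule.span K {(Submodule.Quotient.mk e : V ⧸ W)} = ⊤ := by
    rw [Submodule.eq_top_iff']
    intro x
    obtain ⟨cc, hcc⟩ := hkey x
    rw [← hcc]
    exact Submodule.smul_mem _ _ (Submodule.mem_span_singleton_self _)
  exact ⟨fun a ha => aux_D_mem ha, hiff, aux_e_mem hγ, hspan, finrank_eq_one _ hne hkey⟩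
end
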